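/- Let H(λ) be an n×n pencil of block form [[A(λ), B(λ), C(λ)], [B(λ)^⊤, R(λ), 0], [C(λ)^⊤, 0, 0]] with C(λ) of size a×(n−r+a) and R(λ) regular of size (r−2a)×(r−2a), and suppose rank H = r over ℂ(λ). If λ₀ ∈ ℂ satisfies rank C(λ₀) < a and rank H(λ₀) = r−1, then every r×r minor of H(λ) that is not identically zero is divisible by (λ−λ₀)². -/

import Mathlib

open Matrix Polynomial

/-- The `n × n` block matrix `[[A, B, C], [Bᵀ, R, 0], [Cᵀ, 0, 0]]`. -/
def blockSym3 {F : Type*} [CommRing F] {a b c : ℕ}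
    (A : Matrix (Fin a) (Fin a) F) (B : Matrix (Fin a) (Fin b) F)
    (C : Matrix (Fin a) (Fin c) F) (R : Matrix (Fin b) (Fin b) F) :
    Matrix (Fin a ⊕ (Fin b ⊕ Fin c)) (Fin a ⊕ (Fin b ⊕ Fin c)) F :=
  Matrix.fromBlocks A
    (Matrix.of fun i j => Sum.elim (B i) (C i) j)
    (Matrix.of fun i j => Sum.elim (fun k => B j k) (fun k => C j k) i)
    (Matrix.fromBlocks R 0 0 0)

section Aux

open Finset

private lemma filter_card_le {α β γ : Type*} [Fintype α] [Fintype β] [DecidableEq γ]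
    (f : α → γ) (hf : Function.Injective f) (j : β → γ) (hj : Function.Injective j)
    [DecidablePred fun i => ∃ k, f i = j k] :
    (Finset.univ.filter fun i => ∃ k, f i = j k).card ≤ Fintype.card β := by
  have h1 : (Finset.univ.filter fun i => ∃ k, f i = j k).card
      ≤ ((Finset.univ : Finset β).image j).card := by
    apply Finset.card_le_card_of_injOn f
    · intro i hi
      simp only [Finset.mem_coe, Finset.mem_filter] at hi
      obtain ⟨k, hk⟩ := hi.2
      exact Finset.mem_image.mpr ⟨k, Finset.mem_univ _, hk.symm⟩
    · exact fun x _ y _ h => hf h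
  rw [Finset.card_image_of_injective _ hj, Finset.card_univ] at h1
  exact h1

private lemma card_le_of_det_ne_zero {F : Type*} [CommRing F] {r : ℕ}
    (M : Matrix (Fin r) (Fin r) F) (P Q : Fin r → Prop)
    [DecidablePred P] [DecidablePred Q]
    (h0 : ∀ i j, P i → ¬ Q j → M i j = 0) (hne : M.det ≠ 0) :
    (Finset.univ.filter P).card ≤ (Finset.univ.filter Q).card := by
  by_contra hlt
  push_neg at hlt
  apply hne
  rw [Matrix.det_apply]
  apply Finset.sum_eq_zero
  intro σ _
  by_cases hall : ∀ j, P (σ j) → Q j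
  · exfalso
    have hcardeq : (Finset.univ.filter P).card
        = (Finset.univ.filter fun j => P (σ j)).card := by
      apply Finset.card_bij (fun x _ => σ.symm x)
      · intro x hx
        simp only [Finset.mem_filter, Finset.mem_univ, true_and] at hx ⊢
        simpa using hx
      · intro x _ y _ h
        exact σ.symm.injective h
      · intro y hy
        refine ⟨σ y, ?_, by simp⟩
        simp only [Finset.mem_filter, Finset.mem_univ, true_and] at hy ⊢
        exact hy
    have hsub : (Finset.univ.filter fun j => P (σ j)) ⊆ Finset.univ.filter Q := by
      intro x hx
      simp only [Finset.mem_filter, Finset.mem_univ, true_and] at hx ⊢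
      exact hall x hx
    have := Finset.card_le_card hsub
    omega
  · push_neg at hall
    obtain ⟨j, hPj, hQj⟩ := hall
    rw [show (∏ i, M (σ i) i) = 0 from
      Finset.prod_eq_zero (Finset.mem_univ j) (h0 _ _ hPj hQj), smul_zero]

private lemma filter_partition {a b c r : ℕ} (f : Fin r → Fin a ⊕ (Fin b ⊕ Fin c))
    [DecidablePred fun i => ∃ k, f i = Sum.inl k]
    [DecidablePred fun i => ∃ k, f i = Sum.inr (Sum.inl k)]
    [DecidablePred fun i => ∃ k, f i = Sum.inr (Sum.inr k)] :
    (Finset.univ.filter fun i => ∃ k, f i = Sum.inl k).card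
      + (Finset.univ.filter fun i => ∃ k, f i = Sum.inr (Sum.inl k)).card
      + (Finset.univ.filter fun i => ∃ k, f i = Sum.inr (Sum.inr k)).card = r := by
  classical
  have h1 := Finset.card_filter_add_card_filter_not
    (s := (Finset.univ : Finset (Fin r))) (p := fun i => ∃ k, f i = Sum.inl k)
  have h2 : (Finset.univ.filter fun i => ¬ ∃ k, f i = Sum.inl k)
      = Finset.univ.filter fun i =>
          (∃ k, f i = Sum.inr (Sum.inl k)) ∨ (∃ k, f i = Sum.inr (Sum.inr k)) := by
    apply Finset.filter_congr
    intro i _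
    rcases h : f i with k | k | k <;> simp [h]
  have h3 : (Finset.univ.filter fun i =>
        (∃ k, f i = Sum.inr (Sum.inl k)) ∨ (∃ k, f i = Sum.inr (Sum.inr k)))
      = (Finset.univ.filter fun i => ∃ k, f i = Sum.inr (Sum.inl k))
        ∪ (Finset.univ.filter fun i => ∃ k, f i = Sum.inr (Sum.inr k)) := by
    rw [Finset.filter_or]
  have hdisj : Disjoint (Finset.univ.filter fun i => ∃ k, f i = Sum.inr (Sum.inl k))
      (Finset.univ.filter fun i => ∃ k, f i = Sum.inr (Sum.inr k)) := by
    rw [Finset.disjoint_left]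
    intro x hx hx'
    simp only [Finset.mem_filter, Finset.mem_univ, true_and] at hx hx'
    obtain ⟨k, hk⟩ := hx
    obtain ⟨k', hk'⟩ := hx'
    rw [hk] at hk'
    simp at hk'
  rw [h2, h3, Finset.card_union_of_disjoint hdisj] at h1
  simp only [Finset.card_univ, Fintype.card_fin] at h1
  omega

private lemma exists_block_equiv {a b c r : ℕ} (hr : a + b + a = r)
    (f : Fin r → Fin a ⊕ (Fin b ⊕ Fin c)) (hf : Function.Injective f)
    (hcard : Nat.card {i : Fin r // ∃ k, f i = Sum.inr (Sum.inr k)} = a) :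
    ∃ (φ : Fin a → Fin c) (e : Fin r ≃ (Fin a ⊕ (Fin b ⊕ Fin a))),
      Function.Injective φ ∧ ∀ i, f i = Sum.map id (Sum.map id φ) (e i) := by
  classical
  have htri : ∀ i, ¬ (∃ k, f i = Sum.inl k) → ¬ (∃ k, f i = Sum.inr (Sum.inl k)) →
      (∃ k, f i = Sum.inr (Sum.inr k)) := by
    intro i h1 h2
    rcases h : f i with k | k | k
    · exact absurd ⟨k, h⟩ h1
    · exact absurd ⟨k, h⟩ h2
    · exact ⟨k, rfl⟩
  -- the three "decoding" maps
  set m₁ : {i : Fin r // ∃ k, f i = Sum.inl k} → Fin a := fun x => x.2.choose with hm₁def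
  have hm₁ : ∀ x, f x.1 = Sum.inl (m₁ x) := fun x => x.2.choose_spec
  set m₂ : {i : Fin r // ∃ k, f i = Sum.inr (Sum.inl k)} → Fin b := fun x => x.2.choose
  have hm₂ : ∀ x, f x.1 = Sum.inr (Sum.inl (m₂ x)) := fun x => x.2.choose_spec
  set m₃ : {i : Fin r // ∃ k, f i = Sum.inr (Sum.inr k)} → Fin c := fun x => x.2.choose
  have hm₃ : ∀ x, f x.1 = Sum.inr (Sum.inr (m₃ x)) := fun x => x.2.choose_spec
  have hm₃inj : Function.Injective m₃ := by
    intro x y h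
    apply Subtype.ext
    apply hf
    rw [hm₃ x, hm₃ y, h]
  have hsubcard : Fintype.card {i : Fin r // ∃ k, f i = Sum.inr (Sum.inr k)} = a := by
    rw [← Nat.card_eq_fintype_card]
    exact hcard
  set t₃ : Fin a ≃ {i : Fin r // ∃ k, f i = Sum.inr (Sum.inr k)} :=
    (Fintype.equivFinOfCardEq hsubcard).symm with ht₃def
  refine ⟨m₃ ∘ t₃, ?_⟩
  set u : Fin r → Fin a ⊕ (Fin b ⊕ Fin a) := fun i =>
    if h1 : ∃ k, f i = Sum.inl k then Sum.inl (m₁ ⟨i, h1⟩)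
    else if h2 : ∃ k, f i = Sum.inr (Sum.inl k) then Sum.inr (Sum.inl (m₂ ⟨i, h2⟩))
    else Sum.inr (Sum.inr (t₃.symm ⟨i, htri i h1 h2⟩)) with hudef
  have hu : ∀ i, f i = Sum.map id (Sum.map id (m₃ ∘ t₃)) (u i) := by
    intro i
    rw [hudef]
    by_cases h1 : ∃ k, f i = Sum.inl k
    · simp only [h1, dif_pos]
      simpa using hm₁ ⟨i, h1⟩
    · by_cases h2 : ∃ k, f i = Sum.inr (Sum.inl k)
      · simp only [h1, h2, dif_neg, not_false_iff, dif_pos]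
        simpa using hm₂ ⟨i, h2⟩
      · simp only [h1, h2, dif_neg, not_false_iff]
        have := hm₃ ⟨i, htri i h1 h2⟩
        simp only [Sum.map_inr, Sum.map_inl, id_eq, Function.comp_apply,
          Equiv.apply_symm_apply]
        exact this
  have huinj : Function.Injective u := by
    intro i j h
    apply hf
    rw [hu i, hu j, h]
  have hbij : Function.Bijective u := by
    rw [Fintype.bijective_iff_injective_and_card]
    refine ⟨huinj, ?_⟩
    simp only [Fintype.card_fin, Fintype.card_sum]
    omega
  refine ⟨Equiv.ofBijective u hbij, hm₃inj.comp t₃.injective, fun i => hu i⟩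

private lemma dvd_det_submatrix {F : Type*} [CommRing F] {κ τ : Type*}
    [Fintype κ] [DecidableEq κ] [Fintype τ] [DecidableEq τ]
    (N : Matrix κ κ F) (u v : τ ≃ κ) {d : F} (h : d ∣ N.det) :
    d ∣ (N.submatrix u v).det := by
  have key : N.submatrix ⇑u ⇑v
      = (N.submatrix ⇑v ⇑v).submatrix ⇑(u.trans v.symm) id := by
    ext i j
    simp [Matrix.submatrix_apply]
  rw [key, Matrix.det_permute, Matrix.det_submatrix_equiv_self]
  rcases Int.units_eq_one_or (Equiv.Perm.sign (u.trans v.symm)) with hs | hs <;>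
    rw [hs] <;> simp only [Units.val_one, Units.val_neg, Int.cast_one, Int.cast_neg,
      one_mul, neg_mul, dvd_neg] <;> exact h

private lemma det_dvd_blockSym3 {F : Type*} [CommRing F] {a b c : ℕ}
    (A : Matrix (Fin a) (Fin a) F) (B : Matrix (Fin a) (Fin b) F)
    (C : Matrix (Fin a) (Fin c) F) (R : Matrix (Fin b) (Fin b) F)
    (φ ψ : Fin a → Fin c) :
    (C.submatrix id ψ).det * (C.submatrix id φ).det ∣
      ((blockSym3 A B C R).submatrix (Sum.map id (Sum.map id φ))
        (Sum.map id (Sum.map id ψ))).det := by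
  classical
  set K : Matrix (Fin a ⊕ (Fin b ⊕ Fin a)) (Fin a ⊕ (Fin b ⊕ Fin a)) F :=
    (blockSym3 A B C R).submatrix (Sum.map id (Sum.map id φ))
      (Sum.map id (Sum.map id ψ)) with hKdef
  -- the column rearrangement: new col (inl j) ↦ old col inr (inr j) etc.
  set v : (Fin a ⊕ (Fin b ⊕ Fin a)) ≃ (Fin a ⊕ (Fin b ⊕ Fin a)) :=
    ⟨Sum.elim (fun j => Sum.inr (Sum.inr j)) (Sum.elim (fun j => Sum.inr (Sum.inl j)) Sum.inl),
     Sum.elim (fun j => Sum.inr (Sum.inr j)) (Sum.elim (fun j => Sum.inr (Sum.inl j)) Sum.inl),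
     by rintro (j | j | j) <;> rfl, by rintro (j | j | j) <;> rfl⟩ with hvdef
  have hK : K.submatrix id ⇑v
      = Matrix.fromBlocks (C.submatrix id ψ)
          (Matrix.of fun i => Sum.elim (fun j => B i j) (fun j => A i j))
          0
          (Matrix.fromBlocks R (Matrix.of fun k j => B j k) 0 ((C.submatrix id φ)ᵀ)) := by
    ext i j
    rcases i with i | i | i <;> rcases j with j | j | j <;>
      simp [hKdef, hvdef, blockSym3, Matrix.fromBlocks, Matrix.submatrix_apply]
  have hdet2 : (C.submatrix id ψ).det * (C.submatrix id φ).det ∣ (K.submatrix id ⇑v).det := by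
    rw [hK, Matrix.det_fromBlocks_zero₂₁, Matrix.det_fromBlocks_zero₂₁,
      Matrix.det_transpose]
    exact ⟨R.det, by ring⟩
  have hfinal := dvd_det_submatrix (K.submatrix id ⇑v) (Equiv.refl _) v.symm hdet2
  have : (K.submatrix id ⇑v).submatrix ⇑(Equiv.refl (Fin a ⊕ (Fin b ⊕ Fin a))) ⇑v.symm
      = K := by
    ext i j
    simp [Matrix.submatrix_apply]
  rwa [this] at hfinal

private lemma det_minor_dvd {F : Type*} [CommRing F] {a b c r : ℕ} (hr : a + b + a = r)
    (A : Matrix (Fin a) (Fin a) F) (B : Matrix (Fin a) (Fin b) F)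
    (C : Matrix (Fin a) (Fin c) F) (R : Matrix (Fin b) (Fin b) F)
    (f g : Fin r → Fin a ⊕ (Fin b ⊕ Fin c))
    (hf : Function.Injective f) (hg : Function.Injective g)
    (hne : ((blockSym3 A B C R).submatrix f g).det ≠ 0) :
    ∃ φ ψ : Fin a → Fin c, Function.Injective φ ∧ Function.Injective ψ ∧
      (C.submatrix id ψ).det * (C.submatrix id φ).det ∣
        ((blockSym3 A B C R).submatrix f g).det := by
  classical
  set H := blockSym3 A B C R with hHdef
  set M := H.submatrix f g with hMdef
  -- zero structure of H
  have z1 : ∀ (k : Fin c) (x : Fin b ⊕ Fin c), H (Sum.inr (Sum.inr k)) (Sum.inr x) = 0 := by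
    intro k x
    rcases x with x | x <;> simp [hHdef, blockSym3]
  have z2 : ∀ (x : Fin b ⊕ Fin c) (k : Fin c), H (Sum.inr x) (Sum.inr (Sum.inr k)) = 0 := by
    intro x k
    rcases x with x | x <;> simp [hHdef, blockSym3]
  -- cardinalities
  have hlf : (Finset.univ.filter fun i => ∃ k, f i = Sum.inl k).card ≤ a := by
    simpa using filter_card_le f hf (Sum.inl : Fin a → Fin a ⊕ (Fin b ⊕ Fin c))
      Sum.inl_injective
  have hmf : (Finset.univ.filter fun i => ∃ k, f i = Sum.inr (Sum.inl k)).card ≤ b := by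
    simpa using filter_card_le f hf
      (fun k : Fin b => Sum.inr (Sum.inl k) : Fin b → Fin a ⊕ (Fin b ⊕ Fin c))
      (fun x y h => by simpa using h)
  have hlg : (Finset.univ.filter fun i => ∃ k, g i = Sum.inl k).card ≤ a := by
    simpa using filter_card_le g hg (Sum.inl : Fin a → Fin a ⊕ (Fin b ⊕ Fin c))
      Sum.inl_injective
  have hmg : (Finset.univ.filter fun i => ∃ k, g i = Sum.inr (Sum.inl k)).card ≤ b := by
    simpa using filter_card_le g hg
      (fun k : Fin b => Sum.inr (Sum.inl k) : Fin b → Fin a ⊕ (Fin b ⊕ Fin c))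
      (fun x y h => by simpa using h)
  have hpf := filter_partition f
  have hpg := filter_partition g
  -- bottom rows of the minor are supported on inl-columns
  have hbf : (Finset.univ.filter fun i => ∃ k, f i = Sum.inr (Sum.inr k)).card
      ≤ (Finset.univ.filter fun j => ∃ k, g j = Sum.inl k).card := by
    apply card_le_of_det_ne_zero M _ _ _ hne
    intro i j hPi hQj
    obtain ⟨k, hk⟩ := hPi
    rcases hgj : g j with k' | x
    · exact absurd ⟨k', hgj⟩ hQj
    · simp only [hMdef, Matrix.submatrix_apply, hk, hgj]
      exact z1 k x
  have hbg : (Finset.univ.filter fun j => ∃ k, g j = Sum.inr (Sum.inr k)).card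
      ≤ (Finset.univ.filter fun i => ∃ k, f i = Sum.inl k).card := by
    have hneT : Mᵀ.det ≠ 0 := by rwa [Matrix.det_transpose]
    apply card_le_of_det_ne_zero Mᵀ _ _ _ hneT
    intro j i hPj hQi
    obtain ⟨k, hk⟩ := hPj
    rcases hfi : f i with k' | x
    · exact absurd ⟨k', hfi⟩ hQi
    · simp only [Matrix.transpose_apply, hMdef, Matrix.submatrix_apply, hk, hfi]
      exact z2 x k
  have hbfa : (Finset.univ.filter fun i => ∃ k, f i = Sum.inr (Sum.inr k)).card = a := by
    omega
  have hbga : (Finset.univ.filter fun j => ∃ k, g j = Sum.inr (Sum.inr k)).card = a := by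
    omega
  obtain ⟨φ, e, hφ, he⟩ := exists_block_equiv hr f hf
    (by rw [Nat.card_eq_fintype_card, Fintype.card_subtype]; exact hbfa)
  obtain ⟨ψ, e', hψ, he'⟩ := exists_block_equiv hr g hg
    (by rw [Nat.card_eq_fintype_card, Fintype.card_subtype]; exact hbga)
  refine ⟨φ, ψ, hφ, hψ, ?_⟩
  set K : Matrix (Fin a ⊕ (Fin b ⊕ Fin a)) (Fin a ⊕ (Fin b ⊕ Fin a)) F :=
    H.submatrix (Sum.map id (Sum.map id φ)) (Sum.map id (Sum.map id ψ)) with hKdef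
  have hMK : M = K.submatrix ⇑e ⇑e' := by
    ext i j
    simp only [hMdef, hKdef, Matrix.submatrix_apply]
    rw [he i, he' j]
  rw [hMK]
  exact dvd_det_submatrix K e e' (det_dvd_blockSym3 A B C R φ ψ)

private lemma eval_det_submatrix_eq_zero {a c : ℕ} {lam₀ : ℂ}
    (C : Matrix (Fin a) (Fin c) (Polynomial ℂ))
    (hC : (C.map (Polynomial.eval lam₀)).rank < a)
    (χ : Fin a → Fin c) :
    Polynomial.eval lam₀ (C.submatrix id χ).det = 0 := by
  classical
  set C₀ : Matrix (Fin a) (Fin c) ℂ := C.map (Polynomial.eval lam₀) with hC₀def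
  have hmap : Polynomial.eval lam₀ (C.submatrix id χ).det = (C₀.submatrix id χ).det := by
    have h1 : Polynomial.eval lam₀ (C.submatrix id χ).det
        = ((C.submatrix id χ).map (Polynomial.eval lam₀)).det := by
      simpa using RingHom.map_det (Polynomial.evalRingHom lam₀) (C.submatrix id χ)
    rw [h1, hC₀def, Matrix.submatrix_map]
  rw [hmap]
  by_contra hne
  -- then the submatrix is invertible, so rank C₀ ≥ a
  set N : Matrix (Fin a) (Fin a) ℂ := C₀.submatrix id χ with hNdef
  have hunit : IsUnit N := by
    rw [Matrix.isUnit_iff_isUnit_det]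
    exact isUnit_iff_ne_zero.mpr hne
  have hrankN : N.rank = a := by
    rw [Matrix.rank_of_isUnit N hunit, Fintype.card_fin]
  -- N = C₀ * P for a selection matrix P
  set P : Matrix (Fin c) (Fin a) ℂ := Matrix.of fun k j => if k = χ j then 1 else 0 with hPdef
  have hNP : N = C₀ * P := by
    ext i j
    simp only [hNdef, Matrix.submatrix_apply, id_eq, Matrix.mul_apply, hPdef,
      Matrix.of_apply, mul_ite, mul_one, mul_zero]
    rw [Finset.sum_ite_eq' Finset.univ (χ j) (fun k => C₀ i k)]
    simp
  have hle : N.rank ≤ C₀.rank := by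
    rw [hNP]
    exact Matrix.rank_mul_le_left C₀ P
  rw [hrankN] at hle
  omega

end Aux

/-- Let `H(λ) = [[A, B, C], [Bᵀ, R, 0], [Cᵀ, 0, 0]]` be an `n × n` pencil with `C` of size
`a × (n-r+a)` and `R` regular of size `(r-2a) × (r-2a)`, and suppose `rank H = r` over
`ℂ(λ)`. If `λ₀ ∈ ℂ` satisfies `rank C(λ₀) < a` and `rank H(λ₀) = r - 1`, then every
`r × r` minor of `H(λ)` which is not identically zero is divisible by `(λ - λ₀)²`. -/
theorem stmt10 (n r a : ℕ) (h2a : 2 * a ≤ r) (hrn : r ≤ n) (lam₀ : ℂ)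
    (A : Matrix (Fin a) (Fin a) (Polynomial ℂ))
    (B : Matrix (Fin a) (Fin (r - 2 * a)) (Polynomial ℂ))
    (C : Matrix (Fin a) (Fin (n - r + a)) (Polynomial ℂ))
    (R : Matrix (Fin (r - 2 * a)) (Fin (r - 2 * a)) (Polynomial ℂ))
    (hdeg : ∀ i j, ((blockSym3 A B C R) i j).degree ≤ 1)
    (hreg : R.det ≠ 0)
    (hrank : ((blockSym3 A B C R).map
      (algebraMap (Polynomial ℂ) (RatFunc ℂ))).rank = r)
    (hC : (C.map (Polynomial.eval lam₀)).rank < a)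
    (hH : ((blockSym3 A B C R).map (Polynomial.eval lam₀)).rank = r - 1) :
    ∀ f g : Fin r → (Fin a ⊕ (Fin (r - 2 * a) ⊕ Fin (n - r + a))),
      Function.Injective f → Function.Injective g →
      ((blockSym3 A B C R).submatrix f g).det ≠ 0 →
      (X - Polynomial.C lam₀) ^ 2 ∣ ((blockSym3 A B C R).submatrix f g).det := by
  intro f g hf hg hne
  obtain ⟨φ, ψ, hφ, hψ, hdvd⟩ :=
    det_minor_dvd (by omega : a + (r - 2 * a) + a = r) A B C R f g hf hg hne
  refine dvd_trans ?_ hdvd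
  rw [sq]
  have key : ∀ χ : Fin a → Fin (n - r + a),
      (X - Polynomial.C lam₀) ∣ (C.submatrix id χ).det := by
    intro χ
    rw [Polynomial.dvd_iff_isRoot]
    exact eval_det_submatrix_eq_zero C hC χ
  exact mul_dvd_mul (key ψ) (key φ)
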